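/- Let H be a real Hilbert space, let C ⊆ H be nonempty, closed and convex, and let S : C → H be a weakly regular operator with Fix(S) ≠ ∅. Let x₀ ∈ C be arbitrary and let (T_n)_{n=0}^∞ be a sequence of quasi-nonexpansive operators T_n : C → C such that Fix(S) ⊆ ∩_{n=0}^∞ Fix(T_n). If the sequence (x_n) generated by x_n = T_{n−1}(x_{n−1}) satisfies ‖S x_n − x_n‖ → 0, then (x_n) converges weakly to a point x_* ∈ Fix(S). -/

import Mathlib

open Filter Topology RealInnerProductSpace

variable {H : Type*} [NormedAddCommGroup H] [InnerProductSpace ℝ H] [CompleteSpace H]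

/-- Weak convergence in a Hilbert space: `x n ⇀ p`. -/
def WeakConvergesTo (x : ℕ → H) (p : H) : Prop :=
  ∀ y : H, Tendsto (fun n => ⟪x n, y⟫) atTop (𝓝 ⟪p, y⟫)

/-- `compSeq n g = g (n-1) ∘ ⋯ ∘ g 0` (the identity when `n = 0`). -/
def compSeq {α : Type*} : ℕ → (ℕ → α → α) → (α → α)
  | 0, _ => id
  | n + 1, g => g n ∘ compSeq n g

/-- `P` is the metric projection onto `C`. -/
def IsProjOn (C : Set H) (P : H → H) : Prop :=
  ∀ x, P x ∈ C ∧ ∀ y ∈ C, ‖x - P x‖ ≤ ‖x - y‖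

/-- Nonexpansive operator. -/
def Nonexpansive (T : H → H) : Prop := ∀ x y, ‖T x - T y‖ ≤ ‖x - y‖

/-- Condition (S). -/
def CondS (T : H → H) : Prop :=
  ∀ x y : ℕ → H, (∃ c, ∀ n, ‖x n - y n‖ ≤ c) →
    Tendsto (fun n => ‖x n - y n‖ - ‖T (x n) - T (y n)‖) atTop (𝓝 0) →
    Tendsto (fun n => x n - y n - (T (x n) - T (y n))) atTop (𝓝 (0 : H))

/-- Strongly nonexpansive operator. -/
def StronglyNonexpansive (T : H → H) : Prop := Nonexpansive T ∧ CondS T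

/-- Firmly nonexpansive operator. -/
def FirmlyNonexpansive (T : H → H) : Prop :=
  ∀ x y, ‖T x - T y‖ ^ 2 ≤ ⟪T x - T y, x - y⟫

/-- Averaged operator. -/
def Averaged (T : H → H) : Prop :=
  ∃ lam ∈ Set.Ioo (0 : ℝ) 1, ∃ U : H → H, Nonexpansive U ∧
    T = fun x => (1 - lam) • x + lam • U x

/-- The unrestricted `r`-set Douglas–Rachford operators `S n` associated with projections
`proj i` onto the sets `C i`, indices chosen by `f`: `S n = 2⁻¹ (Id + R_{C_{f((r-1)n+r-1)}} ∘ ⋯ ∘ R_{C_{f((r-1)n)}})`. -/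
noncomputable def drS (proj : ℕ → H → H) (r : ℕ) (f : ℕ → ℕ) (n : ℕ) : H → H :=
  fun x => (2⁻¹ : ℝ) • (x + compSeq r (fun j y => (2 : ℝ) • proj (f ((r - 1) * n + j)) y - y) x)

lemma inner_abs_bound {x y : H} {R : ℝ} (h : ‖x‖ ≤ R) : |⟪x, y⟫| ≤ R * ‖y‖ :=
  (abs_real_inner_le_norm x y).trans (mul_le_mul_of_nonneg_right h (norm_nonneg y))

/-- Weak sequential compactness of bounded sequences in a Hilbert space. -/
theorem exists_weak_subseq (x : ℕ → H) (R : ℝ) (hb : ∀ n, ‖x n‖ ≤ R) :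
    ∃ (p : H) (φ : ℕ → ℕ), StrictMono φ ∧ WeakConvergesTo (fun n => x (φ n)) p := by
  have hR : 0 ≤ R := (norm_nonneg _).trans (hb 0)
  -- Step 1: diagonal subsequence via compactness of a product of intervals
  have hKc : IsCompact (Set.univ.pi fun _ : ℕ => Set.Icc (-(R * R)) (R * R)) :=
    isCompact_univ_pi fun _ => isCompact_Icc
  have hmem : ∀ n, (fun m => ⟪x n, x m⟫) ∈
      Set.univ.pi fun _ : ℕ => Set.Icc (-(R * R)) (R * R) := by
    intro n m _
    have h2 : |⟪x n, x m⟫| ≤ R * R :=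
      (inner_abs_bound (y := x m) (hb n)).trans
        (mul_le_mul_of_nonneg_left (hb m) hR)
    exact abs_le.mp h2
  obtain ⟨ℓ, -, φ, hφ, hconv⟩ := hKc.tendsto_subseq hmem
  rw [tendsto_pi_nhds] at hconv
  -- Step 2: the set where the inner products converge
  set A : Set H := {v | ∃ L, Tendsto (fun n => ⟪x (φ n), v⟫) atTop (𝓝 L)} with hA
  have hA_range : ∀ m, x m ∈ A := fun m => ⟨ℓ m, hconv m⟩
  have hA_add : ∀ v w, v ∈ A → w ∈ A → v + w ∈ A := by
    rintro v w ⟨Lv, hv⟩ ⟨Lw, hw⟩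
    exact ⟨Lv + Lw, by simpa [inner_add_right] using hv.add hw⟩
  have hA_smul : ∀ (c : ℝ) v, v ∈ A → c • v ∈ A := by
    rintro c v ⟨Lv, hv⟩
    exact ⟨c * Lv, by simpa [real_inner_smul_right] using hv.const_mul c⟩
  have hA_closed : closure A ⊆ A := by
    intro v hv
    have hcau : CauchySeq (fun n => ⟪x (φ n), v⟫) := by
      rw [Metric.cauchySeq_iff]
      intro ε hε
      have hε3 : 0 < ε / (3 * (R + 1)) := by positivity
      obtain ⟨w, hwA, hwd⟩ := Metric.mem_closure_iff.mp hv _ hε3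
      obtain ⟨Lw, hLw⟩ := hwA
      have hcw : CauchySeq (fun n => ⟪x (φ n), w⟫) := hLw.cauchySeq
      obtain ⟨N, hN⟩ := Metric.cauchySeq_iff.mp hcw (ε / 3) (by positivity)
      refine ⟨N, fun m hm n hn => ?_⟩
      have key : ∀ k, |⟪x (φ k), v⟫ - ⟪x (φ k), w⟫| ≤ R * ‖v - w‖ := by
        intro k
        rw [← inner_sub_right]
        exact inner_abs_bound (hb (φ k))
      have hvw : R * ‖v - w‖ < ε / 3 := by
        have h1 : ‖v - w‖ < ε / (3 * (R + 1)) := by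
          rwa [dist_eq_norm] at hwd
        have h2 : R * ‖v - w‖ ≤ R * (ε / (3 * (R + 1))) := by
          have := le_of_lt h1
          nlinarith [norm_nonneg (v - w)]
        have h3 : R * (ε / (3 * (R + 1))) < ε / 3 := by
          have he : R * (ε / (3 * (R + 1))) = R * ε / (3 * (R + 1)) := by ring
          rw [he, div_lt_div_iff₀ (by positivity) (by norm_num)]
          nlinarith
        linarith
      have hmn := hN m hm n hn
      rw [Real.dist_eq] at hmn ⊢
      calc |⟪x (φ m), v⟫ - ⟪x (φ n), v⟫|
          ≤ |⟪x (φ m), v⟫ - ⟪x (φ m), w⟫| + |⟪x (φ m), w⟫ - ⟪x (φ n), w⟫|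
            + |⟪x (φ n), w⟫ - ⟪x (φ n), v⟫| := by
            have := abs_sub_le (⟪x (φ m), v⟫) (⟪x (φ m), w⟫) (⟪x (φ n), v⟫)
            have := abs_sub_le (⟪x (φ m), w⟫) (⟪x (φ n), w⟫) (⟪x (φ n), v⟫)
            linarith [abs_sub_le (⟪x (φ m), v⟫) (⟪x (φ m), w⟫) (⟪x (φ n), v⟫),
              abs_sub_le (⟪x (φ m), w⟫) (⟪x (φ n), w⟫) (⟪x (φ n), v⟫)]
        _ < ε / 3 + ε / 3 + ε / 3 := by
            have h1 := key m
            have h2 := key n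
            have h2' : |⟪x (φ n), w⟫ - ⟪x (φ n), v⟫| ≤ R * ‖v - w‖ := by
              rw [abs_sub_comm]; exact h2
            linarith
        _ = ε := by ring
    exact cauchySeq_tendsto_of_complete hcau
  -- Step 3: every vector is in A, by splitting along the closed span M
  set M : Submodule ℝ H := (Submodule.span ℝ (Set.range x)).topologicalClosure with hM
  haveI : CompleteSpace M :=
    (Submodule.isClosed_topologicalClosure _).completeSpace_coe
  have hMA : (M : Set H) ⊆ A := by
    have hspan : (Submodule.span ℝ (Set.range x) : Set H) ⊆ A := by
      intro v hv
      refine Submodule.span_induction (p := fun v _ => v ∈ A) ?_ ⟨0, by simp⟩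
        (fun a b _ _ ha hb => hA_add a b ha hb)
        (fun c a _ ha => hA_smul c a ha) hv
      rintro v ⟨m, rfl⟩
      exact hA_range m
    calc (M : Set H) = closure (Submodule.span ℝ (Set.range x) : Set H) :=
          Submodule.topologicalClosure_coe _
      _ ⊆ closure A := closure_mono hspan
      _ ⊆ A := hA_closed
  have hall : ∀ v : H, v ∈ A := by
    intro v
    have hvdecomp : v = (Submodule.orthogonalProjectionOnto M v : H) + (v - Submodule.orthogonalProjectionOnto M v) := by
      abel
    have h1 : (Submodule.orthogonalProjectionOnto M v : H) ∈ A := hMA (Submodule.orthogonalProjectionOnto M v).2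
    have h2 : (v - Submodule.orthogonalProjectionOnto M v : H) ∈ A := by
      refine ⟨0, ?_⟩
      have : ∀ n, ⟪x (φ n), v - Submodule.orthogonalProjectionOnto M v⟫ = 0 := by
        intro n
        rw [real_inner_comm]
        exact Submodule.starProjection_inner_eq_zero v (x (φ n))
          (Submodule.le_topologicalClosure _ (Submodule.subset_span ⟨φ n, rfl⟩))
      simp only [this]
      exact tendsto_const_nhds
    rw [hvdecomp]
    exact hA_add _ _ h1 h2
  -- Step 4: construct the weak limit via Riesz representation
  choose L hL using hall
  have hLadd : ∀ v w, L (v + w) = L v + L w := by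
    intro v w
    refine tendsto_nhds_unique (hL (v + w)) ?_
    simpa [inner_add_right] using (hL v).add (hL w)
  have hLsmul : ∀ (c : ℝ) v, L (c • v) = c * L v := by
    intro c v
    refine tendsto_nhds_unique (hL (c • v)) ?_
    simpa [real_inner_smul_right] using (hL v).const_mul c
  have hLbound : ∀ v, ‖L v‖ ≤ R * ‖v‖ := by
    intro v
    have : Tendsto (fun n => |⟪x (φ n), v⟫|) atTop (𝓝 |L v|) := (hL v).abs
    have hle : ∀ n, |⟪x (φ n), v⟫| ≤ R * ‖v‖ := fun n => inner_abs_bound (hb (φ n))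
    simpa [Real.norm_eq_abs] using le_of_tendsto this (Eventually.of_forall hle)
  set g : H →L[ℝ] ℝ :=
    LinearMap.mkContinuous
      { toFun := L
        map_add' := hLadd
        map_smul' := hLsmul } R hLbound with hg
  refine ⟨(InnerProductSpace.toDual ℝ H).symm g, φ, hφ, fun y => ?_⟩
  have : ⟪(InnerProductSpace.toDual ℝ H).symm g, y⟫ = g y :=
    InnerProductSpace.toDual_symm_apply
  rw [this]
  exact hL y

/-- Theorem 1.20, generalized Opial theorem. -/
theorem stmt18
    (C : Set H) (hne : C.Nonempty) (hcl : IsClosed C) (hconv : Convex ℝ C)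
    (S : H → H)
    (hSreg : ∀ u : ℕ → H, (∀ n, u n ∈ C) → ∀ p : H, WeakConvergesTo u p →
      Tendsto (fun n => S (u n) - u n) atTop (𝓝 (0 : H)) → p ∈ C ∧ S p = p)
    (hSfix : ∃ z ∈ C, S z = z)
    (T : ℕ → H → H) (hmaps : ∀ n : ℕ, Set.MapsTo (T n) C C)
    (hqne : ∀ n : ℕ, (∃ z ∈ C, T n z = z) ∧
      ∀ x ∈ C, ∀ z ∈ C, T n z = z → ‖T n x - z‖ ≤ ‖x - z‖)
    (hsub : {z : H | z ∈ C ∧ S z = z} ⊆ ⋂ n : ℕ, {z : H | z ∈ C ∧ T n z = z})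
    (x : ℕ → H) (hx0 : x 0 ∈ C) (hx : ∀ n, x (n + 1) = T n (x n))
    (hnorm : Tendsto (fun n => ‖S (x n) - x n‖) atTop (𝓝 0)) :
    ∃ p, (p ∈ C ∧ S p = p) ∧ WeakConvergesTo x p := by
  obtain ⟨z₀, hz₀C, hz₀S⟩ := hSfix
  have xmem : ∀ n, x n ∈ C := by
    intro n
    induction n with
    | zero => exact hx0
    | succ n ih => rw [hx]; exact hmaps n ih
  have step : ∀ z, z ∈ C → S z = z → ∀ n, ‖x (n + 1) - z‖ ≤ ‖x n - z‖ := by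
    intro z hzC hzS n
    have hz' := Set.mem_iInter.mp (hsub ⟨hzC, hzS⟩) n
    rw [hx n]
    exact (hqne n).2 (x n) (xmem n) z hz'.1 hz'.2
  have anti : ∀ z, z ∈ C → S z = z → Antitone fun n => ‖x n - z‖ := fun z hzC hzS =>
    antitone_nat_of_succ_le (step z hzC hzS)
  have hlim : ∀ z, z ∈ C → S z = z → ∃ a, Tendsto (fun n => ‖x n - z‖) atTop (𝓝 a) := by
    intro z hzC hzS
    exact ⟨_, tendsto_atTop_ciInf (anti z hzC hzS)
      ⟨0, by rintro a ⟨n, rfl⟩; exact norm_nonneg _⟩⟩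
  have hbdd : ∀ n, ‖x n‖ ≤ ‖x 0 - z₀‖ + ‖z₀‖ := by
    intro n
    have h1 : ‖x n‖ ≤ ‖x n - z₀‖ + ‖z₀‖ := by
      simpa using norm_add_le (x n - z₀) z₀
    have h2 : ‖x n - z₀‖ ≤ ‖x 0 - z₀‖ := anti z₀ hz₀C hz₀S (Nat.zero_le n)
    linarith
  obtain ⟨p, φ, hφ, hwp⟩ := exists_weak_subseq x _ hbdd
  have hSx : ∀ g : ℕ → ℕ, Tendsto g atTop atTop →
      Tendsto (fun n => S (x (g n)) - x (g n)) atTop (𝓝 (0 : H)) := by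
    intro g hg
    exact tendsto_zero_iff_norm_tendsto_zero.mpr (hnorm.comp hg)
  have hpF : p ∈ C ∧ S p = p :=
    hSreg _ (fun n => xmem (φ n)) p hwp (hSx φ hφ.tendsto_atTop)
  have opial : ∀ q, q ∈ C → S q = q →
      ∀ ψ : ℕ → ℕ, Tendsto ψ atTop atTop → WeakConvergesTo (fun n => x (ψ n)) q → q = p := by
    intro q hqC hqS ψ hψ hwq
    obtain ⟨a, ha⟩ := hlim p hpF.1 hpF.2
    obtain ⟨b, hb⟩ := hlim q hqC hqS
    have hiden : ∀ n, ⟪x n, p - q⟫ =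
        (‖p‖ ^ 2 - ‖q‖ ^ 2 - (‖x n - p‖ ^ 2 - ‖x n - q‖ ^ 2)) / 2 := by
      intro n
      rw [inner_sub_right, norm_sub_sq_real, norm_sub_sq_real]
      ring
    have hc : Tendsto (fun n => ⟪x n, p - q⟫) atTop
        (𝓝 ((‖p‖ ^ 2 - ‖q‖ ^ 2 - (a ^ 2 - b ^ 2)) / 2)) := by
      simp only [hiden]
      exact (tendsto_const_nhds.sub ((ha.pow 2).sub (hb.pow 2))).div_const 2
    have h1 : (‖p‖ ^ 2 - ‖q‖ ^ 2 - (a ^ 2 - b ^ 2)) / 2 = ⟪p, p - q⟫ :=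
      tendsto_nhds_unique (hc.comp hφ.tendsto_atTop) (hwp (p - q))
    have h2 : (‖p‖ ^ 2 - ‖q‖ ^ 2 - (a ^ 2 - b ^ 2)) / 2 = ⟪q, p - q⟫ :=
      tendsto_nhds_unique (hc.comp hψ) (hwq (p - q))
    have h3 : ⟪p - q, p - q⟫ = 0 := by
      rw [inner_sub_left, ← h1, ← h2]
      ring
    have h4 : p - q = 0 := inner_self_eq_zero.mp h3
    exact (sub_eq_zero.mp h4).symm
  refine ⟨p, hpF, fun y => ?_⟩
  apply tendsto_of_subseq_tendsto
  intro ns hns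
  obtain ⟨q, ψ, hψmono, hwq⟩ := exists_weak_subseq (fun n => x (ns n)) _ (fun n => hbdd (ns n))
  have hns' : Tendsto (fun n => ns (ψ n)) atTop atTop := hns.comp hψmono.tendsto_atTop
  have hqF : q ∈ C ∧ S q = q :=
    hSreg _ (fun n => xmem (ns (ψ n))) q hwq (hSx _ hns')
  have hq : q = p := opial q hqF.1 hqF.2 (fun n => ns (ψ n)) hns' hwq
  exact ⟨ψ, by rw [← hq]; exact hwq y⟩
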